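/- arXiv:1807.09646 — 4 statements merged into one kernel-verified Lean document; each statement's English description precedes it below -/
import Mathlib

section
/- Let ε > 0 and let (c_n), (b_n) be sequences of positive integers such that for all sufficiently large n, (b_{n+1}/c_{n+1})^{1/(1+ε)} ≥ (b_n/c_n)^{1/(1+ε)} + 1. Then the series β = Σ_{n=1}^∞ c_n/b_n converges, and there is a constant C > 0 such that for all sufficiently large N, β - Σ_{n=1}^{N} c_n/b_n < C·(c_{N+1}/b_{N+1})^{ε/(1+ε)}. -/
private lemma my_mvt_step {ε a : ℝ} (hε : 0 < ε) (ha : 0 < a) :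
    ε * (a + 1) ^ (-ε - 1) ≤ a ^ (-ε) - (a + 1) ^ (-ε) := by
  have h1 : a < a + 1 := by linarith
  have hcont : ContinuousOn (fun t : ℝ => t ^ (-ε)) (Set.Icc a (a + 1)) := by
    apply ContinuousOn.rpow_const continuousOn_id
    intro t ht
    exact Or.inl (ne_of_gt (lt_of_lt_of_le ha ht.1))
  have hderiv : ∀ t ∈ Set.Ioo a (a + 1),
      HasDerivAt (fun t : ℝ => t ^ (-ε)) (-ε * t ^ (-ε - 1)) t := by
    intro t ht
    exact Real.hasDerivAt_rpow_const (Or.inl (ne_of_gt (lt_trans ha ht.1)))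
  obtain ⟨ξ, hξ, heq⟩ := exists_hasDerivAt_eq_slope (fun t : ℝ => t ^ (-ε))
    (fun t => -ε * t ^ (-ε - 1)) h1 hcont hderiv
  have hξpos : 0 < ξ := lt_trans ha hξ.1
  have hle : (a + 1) ^ (-ε - 1) ≤ ξ ^ (-ε - 1) :=
    Real.rpow_le_rpow_of_nonpos hξpos (le_of_lt hξ.2) (by linarith)
  have hd : (a + 1) - a = 1 := by ring
  rw [hd, div_one] at heq
  nlinarith [heq, hle]

private lemma my_partial_sum {ε x : ℝ} (hε : 0 < ε) (hx : 1 ≤ x) (M : ℕ) :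
    ∑ s ∈ Finset.range M, (x + (s : ℝ)) ^ (-ε - 1) ≤ x ^ (-ε - 1) + x ^ (-ε) / ε := by
  have hxpos : (0 : ℝ) < x := lt_of_lt_of_le one_pos hx
  have key : ∀ M : ℕ, ∑ s ∈ Finset.range (M + 1), (x + (s : ℝ)) ^ (-ε - 1) ≤
      x ^ (-ε - 1) + (x ^ (-ε) - (x + (M : ℝ)) ^ (-ε)) / ε := by
    intro M
    induction M with
    | zero => simp
    | succ M ih =>
      rw [Finset.sum_range_succ]
      have hstep := my_mvt_step hε (show (0:ℝ) < x + (M : ℝ) by positivity)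
      have harr : x + (M : ℝ) + 1 = x + ((M + 1 : ℕ) : ℝ) := by push_cast; ring
      rw [harr] at hstep
      have h2 : (x + ((M + 1 : ℕ) : ℝ)) ^ (-ε - 1) ≤
          ((x + (M : ℝ)) ^ (-ε) - (x + ((M + 1 : ℕ) : ℝ)) ^ (-ε)) / ε := by
        rw [le_div_iff₀ hε]; nlinarith [hstep]
      have h3 : ((x + (M : ℝ)) ^ (-ε) - (x + ((M + 1 : ℕ) : ℝ)) ^ (-ε)) / ε
          = (x ^ (-ε) - (x + ((M + 1 : ℕ) : ℝ)) ^ (-ε)) / ε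
            - (x ^ (-ε) - (x + (M : ℝ)) ^ (-ε)) / ε := by ring
      rw [h3] at h2
      linarith [ih, h2]
  cases M with
  | zero => simp; positivity
  | succ M =>
    have := key M
    have hnn : (0 : ℝ) ≤ (x + (M : ℝ)) ^ (-ε) := Real.rpow_nonneg (by positivity) _
    have h4 : (x ^ (-ε) - (x + (M : ℝ)) ^ (-ε)) / ε ≤ x ^ (-ε) / ε := by
      gcongr
      linarith
    linarith [key M]

set_option maxHeartbeats 1000000 in
/-- Under the root-growth condition, `Σ c_n/b_n` converges and its tails are bounded by
`C·(c_{N+1}/b_{N+1})^{ε/(1+ε)}`. -/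
theorem tail_estimate_condition_two (ε : ℝ) (hε : 0 < ε) (c b : ℕ → ℕ)
    (hc : ∀ n, 0 < c n) (hb : ∀ n, 0 < b n)
    (hstep : ∃ N₀ : ℕ, ∀ n ≥ N₀,
      ((b n : ℝ) / (c n : ℝ)) ^ (1 / (1 + ε)) + 1 ≤
        ((b (n + 1) : ℝ) / (c (n + 1) : ℝ)) ^ (1 / (1 + ε))) :
    Summable (fun n => (c n : ℝ) / (b n : ℝ)) ∧
    ∃ C : ℝ, 0 < C ∧ ∃ N₀ : ℕ, ∀ N ≥ N₀,
      (∑' n, (c n : ℝ) / (b n : ℝ)) - ∑ n ∈ Finset.range N, (c n : ℝ) / (b n : ℝ) <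
        C * ((c N : ℝ) / (b N : ℝ)) ^ (ε / (1 + ε)) := by
  obtain ⟨N₀, hst⟩ := hstep
  have h1ε : (0 : ℝ) < 1 + ε := by linarith
  set x : ℕ → ℝ := fun n => ((b n : ℝ) / (c n : ℝ)) ^ (1 / (1 + ε)) with hxdef
  have hq : ∀ n, (0 : ℝ) < (b n : ℝ) / (c n : ℝ) := fun n =>
    div_pos (by exact_mod_cast hb n) (by exact_mod_cast hc n)
  have hxpos : ∀ n, 0 < x n := fun n => Real.rpow_pos_of_pos (hq n) _
  have hfx : ∀ n, (c n : ℝ) / (b n : ℝ) = x n ^ (-ε - 1) := by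
    intro n
    have : x n ^ (-ε - 1) = ((b n : ℝ) / (c n : ℝ)) ^ ((1 / (1 + ε)) * (-ε - 1)) := by
      rw [Real.rpow_mul (hq n).le]
    rw [this]
    have hexp : (1 / (1 + ε)) * (-ε - 1) = -1 := by field_simp; ring
    rw [hexp, Real.rpow_neg_one, inv_div]
  have hgrow : ∀ n, N₀ ≤ n → ∀ s : ℕ, x n + (s : ℝ) ≤ x (n + s) := by
    intro n hn s
    induction s with
    | zero => simp
    | succ s ih =>
      have h := hst (n + s) (le_trans hn (Nat.le_add_right _ _))
      push_cast
      calc x n + ((s : ℝ) + 1) = (x n + (s : ℝ)) + 1 := by ring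
        _ ≤ x (n + s) + 1 := by linarith
        _ ≤ x (n + s + 1) := h
  have hx1 : ∀ N, N₀ + 1 ≤ N → 1 ≤ x N := by
    intro N hN
    have h := hgrow N₀ le_rfl (N - N₀)
    rw [Nat.add_sub_cancel' (by omega)] at h
    have h1 : (1 : ℝ) ≤ ((N - N₀ : ℕ) : ℝ) := by
      exact_mod_cast Nat.one_le_iff_ne_zero.mpr (by omega)
    linarith [hxpos N₀]
  have hshift : ∀ N, N₀ + 1 ≤ N → ∀ s : ℕ,
      (c (N + s) : ℝ) / (b (N + s) : ℝ) ≤ (x N + (s : ℝ)) ^ (-ε - 1) := by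
    intro N hN s
    rw [hfx]
    have hxN : 1 ≤ x N := hx1 N hN
    have hs : (0 : ℝ) ≤ (s : ℝ) := Nat.cast_nonneg s
    exact Real.rpow_le_rpow_of_nonpos (by linarith)
      (hgrow N (by omega) s) (by linarith)
  have hnn : ∀ (y : ℝ), 1 ≤ y → ∀ (s : ℕ), (0 : ℝ) ≤ (y + (s : ℝ)) ^ (-ε - 1) := by
    intro y hy s
    have hs : (0 : ℝ) ≤ (s : ℝ) := Nat.cast_nonneg s
    exact Real.rpow_nonneg (by linarith) _
  have hsumg : ∀ (y : ℝ), 1 ≤ y → Summable (fun s : ℕ => (y + (s : ℝ)) ^ (-ε - 1)) := by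
    intro y hy
    exact summable_of_sum_range_le (fun s => hnn y hy s) (fun M => my_partial_sum hε hy M)
  have hsumshift : Summable (fun s : ℕ => (c (s + (N₀ + 1)) : ℝ) / (b (s + (N₀ + 1)) : ℝ)) := by
    apply Summable.of_nonneg_of_le (fun s => by positivity) ?_ (hsumg (x (N₀ + 1)) (hx1 _ le_rfl))
    intro s
    rw [add_comm s (N₀ + 1)]
    exact hshift (N₀ + 1) le_rfl s
  have hfsum : Summable (fun n => (c n : ℝ) / (b n : ℝ)) :=
    (summable_nat_add_iff (N₀ + 1)).mp hsumshift
  refine ⟨hfsum, 2 + 1 / ε, by positivity, N₀ + 1, ?_⟩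
  intro N hN
  have htail : (∑' n, (c n : ℝ) / (b n : ℝ)) - ∑ n ∈ Finset.range N, (c n : ℝ) / (b n : ℝ)
      = ∑' s : ℕ, (c (s + N) : ℝ) / (b (s + N) : ℝ) := by
    rw [← Summable.sum_add_tsum_nat_add N hfsum]; ring
  have hxN : 1 ≤ x N := hx1 N hN
  have h2 : ∑' s : ℕ, (c (s + N) : ℝ) / (b (s + N) : ℝ) ≤
      ∑' s : ℕ, (x N + (s : ℝ)) ^ (-ε - 1) := by
    have hs1 : Summable (fun s : ℕ => (c (s + N) : ℝ) / (b (s + N) : ℝ)) :=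
      (summable_nat_add_iff (f := fun n => (c n : ℝ) / (b n : ℝ)) N).mpr hfsum
    refine Summable.tsum_le_tsum (fun s => ?_) hs1 (hsumg (x N) hxN)
    rw [add_comm s N]
    exact hshift N hN s
  have h3 : ∑' s : ℕ, (x N + (s : ℝ)) ^ (-ε - 1) ≤ x N ^ (-ε - 1) + x N ^ (-ε) / ε :=
    Summable.tsum_le_of_sum_range_le (hsumg (x N) hxN) (fun M => my_partial_sum hε hxN M)
  have h4 : x N ^ (-ε - 1) ≤ x N ^ (-ε) :=
    Real.rpow_le_rpow_of_exponent_le hxN (by linarith)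
  have h5 : x N ^ (-ε) = ((c N : ℝ) / (b N : ℝ)) ^ (ε / (1 + ε)) := by
    have hrw : (c N : ℝ) / (b N : ℝ) = ((b N : ℝ) / (c N : ℝ))⁻¹ := by rw [inv_div]
    rw [hrw, Real.inv_rpow (hq N).le, ← Real.rpow_neg (hq N).le]
    simp only [hxdef]
    rw [← Real.rpow_mul (hq N).le]
    congr 1
    field_simp
  have hpos : 0 < x N ^ (-ε) := Real.rpow_pos_of_pos (hxpos N) _
  rw [htail, ← h5]
  have hfin : x N ^ (-ε - 1) + x N ^ (-ε) / ε < (2 + 1 / ε) * x N ^ (-ε) := by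
    have heq : x N ^ (-ε) / ε = (1 / ε) * x N ^ (-ε) := by ring
    nlinarith [hpos, h4]
  linarith [h2, h3]
end

section
/- Let (b_n) be defined by b₁ = 2 and b_{n+1} = (b₁b₂⋯b_n)² for n ≥ 1, and let d(n) denote the number of divisors of n. Then the real numbers 1, Σ_{n=1}^∞ 1/b_n, and Σ_{n=1}^∞ d(n)/b_n are linearly independent over ℚ. -/
open Finset Filter

-- aux: tsum of (n + a) * (1/2)^n = 2 + 2a
lemma aux_tsum_linear_geom (a : ℝ) :
    ∑' n : ℕ, ((n : ℝ) + a) * (1/2 : ℝ) ^ n = 2 + 2 * a := by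
  have hr : ‖(1/2 : ℝ)‖ < 1 := by rw [Real.norm_eq_abs, abs_div, abs_one, abs_two]; norm_num
  have h1 : Summable (fun n : ℕ => (n : ℝ) * (1/2 : ℝ) ^ n) := by
    simpa using summable_pow_mul_geometric_of_norm_lt_one 1 hr
  have h2 : Summable (fun n : ℕ => a * (1/2 : ℝ) ^ n) :=
    (summable_geometric_of_lt_one (by norm_num) (by norm_num)).mul_left a
  have := Summable.tsum_add h1 h2
  have e1 : ∑' n : ℕ, (n : ℝ) * (1/2 : ℝ) ^ n = 2 := by
    rw [tsum_coe_mul_geometric_of_norm_lt_one hr]; norm_num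
  have e2 : ∑' n : ℕ, a * (1/2 : ℝ) ^ n = a * 2 := by
    rw [tsum_mul_left, tsum_geometric_two]
  calc ∑' n : ℕ, ((n : ℝ) + a) * (1/2 : ℝ) ^ n
      = ∑' n : ℕ, ((n : ℝ) * (1/2 : ℝ) ^ n + a * (1/2 : ℝ) ^ n) := by
        congr 1; funext n; ring
    _ = 2 + 2 * a := by rw [this, e1, e2]; ring

lemma aux_summable_linear_geom (a : ℝ) :
    Summable (fun n : ℕ => ((n : ℝ) + a) * (1/2 : ℝ) ^ n) := by
  have hr : ‖(1/2 : ℝ)‖ < 1 := by rw [Real.norm_eq_abs, abs_div, abs_one, abs_two]; norm_num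
  have h1 : Summable (fun n : ℕ => (n : ℝ) * (1/2 : ℝ) ^ n) := by
    simpa using summable_pow_mul_geometric_of_norm_lt_one 1 hr
  have h2 : Summable (fun n : ℕ => a * (1/2 : ℝ) ^ n) :=
    (summable_geometric_of_lt_one (by norm_num) (by norm_num)).mul_left a
  have := h1.add h2
  convert this using 2 with n; ring

set_option maxHeartbeats 2000000

/-- For `b₁ = 2`, `b_{n+1} = (b₁⋯b_n)²`, the numbers `1`, `Σ 1/b_n` and `Σ d(n)/b_n`
are linearly independent over ℚ. -/
theorem one_sum_divisorSum_linearIndependent (b : ℕ → ℕ) (hb1 : b 1 = 2)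
    (hrec : ∀ n ≥ 1, b (n + 1) = (∏ k ∈ Finset.Icc 1 n, b k) ^ 2) :
    ∀ z₀ z₁ z₂ : ℤ,
      (z₀ : ℝ) + (z₁ : ℝ) * (∑' n : ℕ, 1 / (b (n + 1) : ℝ)) +
        (z₂ : ℝ) * (∑' n : ℕ, ((Nat.divisors (n + 1)).card : ℝ) / (b (n + 1) : ℝ)) = 0 →
      z₀ = 0 ∧ z₁ = 0 ∧ z₂ = 0 := by
  intro z₀ z₁ z₂ hyp
  set P : ℕ → ℕ := fun N => ∏ k ∈ Finset.Icc 1 N, b k with hPdef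
  -- closed form for P
  have hP : ∀ m : ℕ, P (m+1) = 2 ^ (3 ^ m) := by
    intro m
    induction m with
    | zero => simp [hPdef, hb1]
    | succ m ih =>
      have h1 : P (m+1+1) = P (m+1) * b (m+1+1) :=
        Finset.prod_Icc_succ_top (by omega) b
      have h2 : b (m+1+1) = P (m+1) ^ 2 := hrec (m+1) (by omega)
      rw [h1, h2, ih, ← pow_mul, ← pow_add]
      congr 1
      rw [pow_succ]; ring
  have hbf : ∀ m : ℕ, b (m+2) = 2 ^ (2 * 3 ^ m) := by
    intro m
    rw [show m + 2 = (m+1) + 1 by ring, hrec (m+1) (by omega)]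
    show (P (m+1)) ^ 2 = _
    rw [hP m, ← pow_mul]
    congr 1; ring
  have bpos : ∀ n : ℕ, 0 < b (n+1) := by
    intro n
    match n with
    | 0 => rw [hb1]; omega
    | Nat.succ m => rw [show m + 1 + 1 = m + 2 by ring, hbf m]; positivity
  -- growth bound: b (n+1) ≥ 2^(n+1)
  have blb : ∀ n : ℕ, 2 ^ (n+1) ≤ b (n+1) := by
    intro n
    match n with
    | 0 => rw [hb1]; norm_num
    | Nat.succ m =>
      rw [show m + 1 + 1 = m + 2 by ring, hbf m]
      apply Nat.pow_le_pow_right (by norm_num)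
      have := Nat.lt_pow_self (n := m) (show 1 < 3 by norm_num)
      omega
  -- tail growth: b (m+2+j) ≥ b (m+2) * 2^j
  have btail : ∀ m j : ℕ, b (m+2) * 2 ^ j ≤ b (m+2+j) := by
    intro m j
    rw [hbf m, show m + 2 + j = (m+j) + 2 by ring, hbf (m+j), ← pow_add]
    apply Nat.pow_le_pow_right (by norm_num)
    have h3j := Nat.lt_pow_self (n := j) (show 1 < 3 by norm_num)
    have h3m : 1 ≤ 3 ^ m := Nat.one_le_pow _ _ (by norm_num)
    have : 3 ^ (m + j) = 3 ^ m * 3 ^ j := pow_add 3 m j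
    nlinarith
  -- real term function
  set c : ℕ → ℝ := fun n => ((z₁ : ℝ) + (z₂ : ℝ) * ((Nat.divisors (n+1)).card : ℝ)) / (b (n+1) : ℝ)
    with hcdef
  set C : ℝ := |(z₁ : ℝ)| + |(z₂ : ℝ)| with hCdef
  have hC0 : 0 ≤ C := by positivity
  have hdle : ∀ m : ℕ, ((Nat.divisors (m+1)).card : ℝ) ≤ (m : ℝ) + 2 := by
    intro m
    have hsub : Nat.divisors (m+1) ⊆ Finset.range (m+2) := by
      intro x hx
      rw [Finset.mem_range]
      have h1 : x ∣ m + 1 := (Nat.mem_divisors.mp hx).1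
      have := Nat.le_of_dvd (by omega) h1
      omega
    have := Finset.card_le_card hsub
    rw [Finset.card_range] at this
    exact_mod_cast by exact_mod_cast this.trans (by omega : m + 2 ≤ m + 2)
  have hnum : ∀ n : ℕ, |(z₁ : ℝ) + (z₂ : ℝ) * ((Nat.divisors (n+1)).card : ℝ)| ≤ C * ((n:ℝ) + 2) := by
    intro n
    have h1 := abs_add_le (z₁ : ℝ) ((z₂ : ℝ) * ((Nat.divisors (n+1)).card : ℝ))
    rw [abs_mul, abs_of_nonneg (by positivity : (0:ℝ) ≤ ((Nat.divisors (n+1)).card : ℝ))] at h1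
    have h2 := hdle n
    have h3 : (0:ℝ) ≤ |(z₁:ℝ)| := abs_nonneg _
    have h4 : (0:ℝ) ≤ |(z₂:ℝ)| := abs_nonneg _
    have h5 : (0:ℝ) ≤ ((Nat.divisors (n+1)).card : ℝ) := by positivity
    rw [hCdef]
    nlinarith
  have hcabs : ∀ n : ℕ, |c n| = |(z₁ : ℝ) + (z₂ : ℝ) * ((Nat.divisors (n+1)).card : ℝ)| / (b (n+1) : ℝ) := by
    intro n
    have hbpos : (0:ℝ) < (b (n+1) : ℝ) := by exact_mod_cast bpos n
    rw [hcdef]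
    rw [abs_div, abs_of_pos hbpos]
  have hcb : ∀ n : ℕ, |c n| ≤ C * (((n:ℝ) + 2) * (1/2 : ℝ)^n) := by
    intro n
    have hbpos : (0:ℝ) < (b (n+1) : ℝ) := by exact_mod_cast bpos n
    have h2b : (2:ℝ)^(n+1) ≤ (b (n+1) : ℝ) := by exact_mod_cast blb n
    have h2p : (0:ℝ) < (2:ℝ)^(n+1) := by positivity
    rw [hcabs n]
    have step1 : |(z₁ : ℝ) + (z₂ : ℝ) * ((Nat.divisors (n+1)).card : ℝ)| / (b (n+1) : ℝ)
        ≤ (C * ((n:ℝ) + 2)) / (2:ℝ)^(n+1) := by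
      apply div_le_div₀ (by positivity) (hnum n) h2p h2b
    refine step1.trans ?_
    rw [div_le_iff₀ (by positivity)]
    have : (1/2:ℝ)^n * 2^(n+1) = 2 := by
      rw [one_div, inv_pow, pow_succ]
      field_simp
    calc C * ((n:ℝ) + 2) ≤ C * ((n:ℝ) + 2) * 2 := by
          nlinarith [mul_nonneg hC0 (by positivity : (0:ℝ) ≤ (n:ℝ) + 2)]
      _ = C * (((n:ℝ) + 2) * (1/2:ℝ)^n) * 2^(n+1) := by
          have h2' : C * (((n:ℝ)+2) * (1/2:ℝ)^n) * 2^(n+1)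
              = C * ((n:ℝ)+2) * ((1/2:ℝ)^n * 2^(n+1)) := by ring
          rw [h2', this]
  have habs : Summable (fun n : ℕ => |c n|) := by
    apply Summable.of_nonneg_of_le (fun n => abs_nonneg _) hcb
    exact (aux_summable_linear_geom 2).mul_left C
  have hc : Summable c := summable_abs_iff.mp habs
  -- summability of the two original series
  have hgs : Summable (fun n : ℕ => (1/2:ℝ)^(n+1)) :=
    (summable_nat_add_iff 1).mpr (summable_geometric_of_lt_one (by norm_num) (by norm_num))
  have hs1 : Summable (fun n : ℕ => 1 / (b (n+1) : ℝ)) := by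
    apply Summable.of_nonneg_of_le (fun n => by positivity) (fun n => ?_) hgs
    have hbpos : (0:ℝ) < (b (n+1) : ℝ) := by exact_mod_cast bpos n
    have h2b : (2:ℝ)^(n+1) ≤ (b (n+1) : ℝ) := by exact_mod_cast blb n
    rw [show ((1:ℝ)/2)^(n+1) = 1/2^(n+1) by rw [one_div_pow]]
    exact one_div_le_one_div_of_le (by positivity) h2b
  have hs2 : Summable (fun n : ℕ => ((Nat.divisors (n+1)).card : ℝ) / (b (n+1) : ℝ)) := by
    apply Summable.of_nonneg_of_le (fun n => by positivity) (fun n => ?_)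
      (aux_summable_linear_geom 2)
    have hbpos : (0:ℝ) < (b (n+1) : ℝ) := by exact_mod_cast bpos n
    have h2b : (2:ℝ)^(n+1) ≤ (b (n+1) : ℝ) := by exact_mod_cast blb n
    have h1 : ((Nat.divisors (n+1)).card : ℝ) / (b (n+1) : ℝ) ≤ ((n:ℝ)+2) / 2^(n+1) :=
      div_le_div₀ (by positivity) (hdle n) (by positivity) h2b
    refine h1.trans ?_
    rw [div_le_iff₀ (by positivity)]
    have h2 : ((n:ℝ)+2) * (1/2:ℝ)^n * 2^(n+1) = ((n:ℝ)+2) * ((1/2:ℝ)^n * 2^(n+1)) := by ring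
    have h3 : (1/2:ℝ)^n * 2^(n+1) = 2 := by rw [one_div, inv_pow, pow_succ]; field_simp
    rw [h2, h3]
    nlinarith [Nat.cast_nonneg (α := ℝ) n]
  -- rephrase hypothesis using c
  have hsum : (z₀ : ℝ) + ∑' n, c n = 0 := by
    have e : ∑' n, c n = (z₁:ℝ) * ∑' n : ℕ, 1/(b (n+1):ℝ)
        + (z₂:ℝ) * ∑' n : ℕ, ((Nat.divisors (n+1)).card : ℝ)/(b (n+1):ℝ) := by
      rw [← tsum_mul_left, ← tsum_mul_left, ← Summable.tsum_add (hs1.mul_left _) (hs2.mul_left _)]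
      congr 1
      funext n
      simp only [hcdef]
      have hbne : (b (n+1) : ℝ) ≠ 0 := by
        have := bpos n; positivity
      field_simp
    rw [e]; linarith [hyp]
  -- tail estimate
  have tail_le : ∀ m : ℕ, |∑' n, c (n + (m+1))| ≤ C * (2*(m:ℝ) + 8) / (b (m+2) : ℝ) := by
    intro m
    have hbpos : (0:ℝ) < (b (m+2) : ℝ) := by exact_mod_cast bpos (m+1)
    have hsub : Summable (fun n => |c (n + (m+1))|) := (summable_nat_add_iff (m+1)).mpr habs
    have bound : ∀ n : ℕ,
        |c (n + (m+1))| ≤ C / (b (m+2):ℝ) * (((n:ℝ) + ((m:ℝ)+3)) * (1/2:ℝ)^n) := by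
      intro n
      have hb2 : (b (m+2) : ℝ) * 2^n ≤ (b (n + (m+1) + 1) : ℝ) := by
        have h := btail m n
        have e : m + 2 + n = n + (m+1) + 1 := by omega
        rw [e] at h
        exact_mod_cast h
      rw [hcabs]
      have h2 : |(z₁:ℝ) + (z₂:ℝ) * ((Nat.divisors (n + (m+1) + 1)).card : ℝ)|
            / (b (n+(m+1)+1) : ℝ)
          ≤ (C * (((n + (m+1) : ℕ) : ℝ) + 2)) / ((b (m+2) : ℝ) * 2^n) :=
        div_le_div₀ (by positivity) (hnum (n + (m+1))) (by positivity) hb2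
      refine h2.trans ?_
      have e2 : (((n + (m+1) : ℕ)):ℝ) = (n:ℝ) + (m:ℝ) + 1 := by push_cast; ring
      rw [e2]
      have e3 : C * ((n:ℝ) + (m:ℝ) + 1 + 2) / ((b (m+2):ℝ) * 2^n)
          = C / (b (m+2):ℝ) * (((n:ℝ) + ((m:ℝ)+3)) * (1/2:ℝ)^n) := by
        rw [one_div, inv_pow, div_eq_mul_inv, div_eq_mul_inv, mul_inv]
        ring
      rw [e3]

    have h3 : |∑' n, c (n + (m+1))| ≤ ∑' n, |c (n + (m+1))| := by
      simpa [Real.norm_eq_abs] using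
        norm_tsum_le_tsum_norm (f := fun n => c (n + (m+1)))
          (by simpa [Real.norm_eq_abs] using hsub)
    have h4 : ∑' n, |c (n + (m+1))|
        ≤ ∑' n : ℕ, C / (b (m+2):ℝ) * (((n:ℝ) + ((m:ℝ)+3)) * (1/2:ℝ)^n) :=
      Summable.tsum_le_tsum bound hsub ((aux_summable_linear_geom _).mul_left _)
    have h5 : ∑' n : ℕ, C / (b (m+2):ℝ) * (((n:ℝ) + ((m:ℝ)+3)) * (1/2:ℝ)^n)
        = C / (b (m+2):ℝ) * (2 + 2*((m:ℝ)+3)) := by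
      rw [tsum_mul_left, aux_tsum_linear_geom]
    have h6 : C / (b (m+2):ℝ) * (2 + 2*((m:ℝ)+3)) = C * (2*(m:ℝ)+8) / (b (m+2):ℝ) := by ring
    linarith [h3.trans (h4.trans_eq (h5.trans h6))]
  -- integrality of partial sums times P N
  have hint : ∀ N : ℕ, 1 ≤ N →
      ∃ I : ℤ, (I : ℝ) = (P N : ℝ) * ((z₀:ℝ) + ∑ k ∈ Finset.range N, c k) := by
    intro N hN
    refine ⟨(P N : ℤ) * z₀ + ∑ k ∈ Finset.range N,
      (z₁ + z₂ * ((Nat.divisors (k+1)).card : ℤ)) * ((P N / b (k+1) : ℕ) : ℤ), ?_⟩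
    have term : ∀ k ∈ Finset.range N,
        (((z₁ + z₂ * ((Nat.divisors (k+1)).card : ℤ)) * ((P N / b (k+1) : ℕ) : ℤ) : ℤ) : ℝ)
          = (P N : ℝ) * c k := by
      intro k hk
      rw [Finset.mem_range] at hk
      have hdvd : b (k+1) ∣ P N :=
        Finset.dvd_prod_of_mem b (Finset.mem_Icc.mpr ⟨by omega, by omega⟩)
      have hbne : (b (k+1) : ℝ) ≠ 0 := by have := bpos k; positivity
      have hq2 : b (k+1) * (P N / b (k+1)) = P N := Nat.mul_div_cancel' hdvd
      have hq3 : (b (k+1) : ℝ) * ((P N / b (k+1) : ℕ) : ℝ) = (P N : ℝ) := by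
        exact_mod_cast congrArg (Nat.cast : ℕ → ℝ) hq2
      have hq : ((P N / b (k+1) : ℕ) : ℝ) = (P N : ℝ) / (b (k+1) : ℝ) := by
        rw [eq_div_iff hbne]; linarith [hq3]
      rw [Int.cast_mul]
      rw [show (((P N / b (k+1) : ℕ) : ℤ) : ℝ) = ((P N / b (k+1) : ℕ) : ℝ) from by push_cast; rfl]
      rw [hq]
      simp only [hcdef]
      push_cast
      field_simp
    rw [Int.cast_add, Int.cast_sum, Finset.sum_congr rfl term, Int.cast_mul, mul_add,
      Finset.mul_sum]
    push_cast
    ring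
  -- eventual smallness
  have hev : ∀ᶠ (N : ℕ) in atTop, 2*C * (((N:ℝ) + 4) * (1/2:ℝ)^N) < 1 := by
    have hs : Summable (fun N : ℕ => 2*C * (((N:ℝ) + 4) * (1/2:ℝ)^N)) :=
      (aux_summable_linear_geom 4).mul_left (2*C)
    exact hs.tendsto_atTop_zero.eventually_lt_const (by norm_num)
  obtain ⟨N₀, hN₀⟩ := eventually_atTop.mp hev
  -- tails vanish for large N
  have tailzero : ∀ N : ℕ, max N₀ 1 ≤ N → ∑' n, c (n + N) = 0 := by
    intro N hNge
    obtain ⟨m, rfl⟩ : ∃ m, N = m + 1 := ⟨N - 1, by omega⟩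
    have hN0 : N₀ ≤ m + 1 := le_trans (le_max_left _ _) hNge
    obtain ⟨I, hI⟩ := hint (m+1) (by omega)
    have hsplit := Summable.sum_add_tsum_nat_add (f := c) (m+1) hc
    have hPpos : (0:ℝ) < (P (m+1) : ℝ) := by
      rw [hP m]; positivity
    have hIeq : (I:ℝ) = -((P (m+1) : ℝ) * ∑' n, c (n + (m+1))) := by
      rw [hI]
      have : (z₀:ℝ) + (∑ k ∈ Finset.range (m+1), c k + ∑' n, c (n + (m+1))) = 0 := by
        rw [hsplit]; exact hsum
      nlinarith [this]
    have hb2 : (b (m+2) : ℝ) = (P (m+1):ℝ)^2 := by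
      have h := hrec (m+1) (by omega)
      rw [show m+1+1 = m+2 by ring] at h
      exact_mod_cast congrArg (Nat.cast : ℕ → ℝ) h
    have hbpos : (0:ℝ) < (b (m+2):ℝ) := by exact_mod_cast bpos (m+1)
    have hPb : (P (m+1):ℝ) * (C * (2*(m:ℝ)+8) / (b (m+2):ℝ))
        = C * (2*(m:ℝ)+8) / (P (m+1):ℝ) := by
      rw [hb2]
      field_simp
    have hIb : |(I:ℝ)| ≤ C * (2*(m:ℝ)+8) / (P (m+1):ℝ) := by
      rw [hIeq, abs_neg, abs_mul, abs_of_pos hPpos]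
      calc (P (m+1):ℝ) * |∑' n, c (n+(m+1))|
          ≤ (P (m+1):ℝ) * (C * (2*(m:ℝ)+8)/(b (m+2):ℝ)) :=
            mul_le_mul_of_nonneg_left (tail_le m) hPpos.le
        _ = _ := hPb
    have hP2 : (2:ℝ)^(m+1) ≤ (P (m+1):ℝ) := by
      rw [hP m]
      have h3 : m + 1 ≤ 3^m := Nat.lt_pow_self (n := m) (by norm_num)
      calc (2:ℝ)^(m+1) ≤ (2:ℝ)^(3^m) := by
            apply pow_le_pow_right₀ (by norm_num) h3
        _ = ((2^(3^m) : ℕ) : ℝ) := by push_cast; ring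
    have hlt : C * (2*(m:ℝ)+8) / (P (m+1):ℝ) < 1 := by
      have hev1 := hN₀ (m+1) hN0
      have h2p : (0:ℝ) < (2:ℝ)^(m+1) := by positivity
      have step1 : C * (2*(m:ℝ)+8) / (P (m+1):ℝ) ≤ C * (2*(m:ℝ)+8) / (2:ℝ)^(m+1) :=
        div_le_div_of_nonneg_left (by positivity) h2p hP2
      refine lt_of_le_of_lt step1 ?_
      have e4 : (((m+1 : ℕ)):ℝ) = (m:ℝ) + 1 := by push_cast; ring
      rw [e4] at hev1
      have e5 : 2*C * (((m:ℝ) + 1 + 4) * (1/2:ℝ)^(m+1))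
          = (2*C * ((m:ℝ)+5)) / (2:ℝ)^(m+1) := by
        rw [one_div, inv_pow]
        ring
      rw [e5] at hev1
      refine lt_of_le_of_lt ?_ hev1
      apply div_le_div_of_nonneg_right ?_ h2p.le
      nlinarith [hC0]
    have hIlt : |I| < 1 := by
      have : |(I:ℝ)| < 1 := lt_of_le_of_lt hIb hlt
      exact_mod_cast (by rwa [← Int.cast_abs] at this : ((|I|:ℤ):ℝ) < 1)
    have hI0 : I = 0 := by
      have h := abs_lt.mp hIlt
      omega
    rw [hI0] at hIeq
    have h0 : (P (m+1):ℝ) * ∑' n, c (n + (m+1)) = 0 := by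
      simpa using hIeq.symm
    rcases mul_eq_zero.mp h0 with h | h
    · exact absurd h hPpos.ne'
    · exact h
  -- the coefficients vanish
  have czero : ∀ N : ℕ, max N₀ 1 ≤ N → z₁ + z₂ * ((Nat.divisors (N+1)).card : ℤ) = 0 := by
    intro N hNge
    have h1 := tailzero N hNge
    have h2 := tailzero (N+1) (le_trans hNge (by omega))
    have hsubN : Summable (fun n => c (n + N)) := (summable_nat_add_iff N).mpr hc
    have hsplit := Summable.tsum_eq_zero_add hsubN
    have e : (fun n : ℕ => c (n + 1 + N)) = (fun n : ℕ => c (n + (N+1))) := by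
      funext n; congr 1; omega
    rw [h1, e, h2] at hsplit
    have hcN : c N = 0 := by simpa using hsplit.symm
    have hbne : (b (N+1) : ℝ) ≠ 0 := by have := bpos N; positivity
    have hnum0 : (z₁:ℝ) + (z₂:ℝ) * ((Nat.divisors (N+1)).card : ℝ) = 0 := by
      simp only [hcdef] at hcN
      exact (div_eq_zero_iff.mp hcN).resolve_right hbne
    exact_mod_cast hnum0
  -- plug in primes
  obtain ⟨p, hple, hpp⟩ := Nat.exists_infinite_primes (max N₀ 1 + 2)
  have hp2 : 2 ≤ p := hpp.two_le
  have e1 : z₁ + z₂ * ((Nat.divisors p).card : ℤ) = 0 := by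
    have h := czero (p-1) (by omega)
    rwa [show p - 1 + 1 = p by omega] at h
  have hpsq : p ≤ p^2 := Nat.le_self_pow (by norm_num) p
  have e2 : z₁ + z₂ * ((Nat.divisors (p^2)).card : ℤ) = 0 := by
    have h := czero (p^2-1) (by omega)
    rwa [show p^2 - 1 + 1 = p^2 by omega] at h
  have hd1 : (Nat.divisors p).card = 2 := by
    rw [hpp.divisors]
    exact Finset.card_pair hpp.one_lt.ne
  have hd2 : (Nat.divisors (p^2)).card = 3 := by
    rw [Nat.divisors_prime_pow hpp]
    simp
  rw [hd1] at e1
  rw [hd2] at e2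
  have hz1 : z₁ = 0 := by omega
  have hz2 : z₂ = 0 := by omega
  refine ⟨?_, hz1, hz2⟩
  rw [hz1, hz2] at hyp
  push_cast at hyp
  simp at hyp
  exact_mod_cast hyp
end

section
/- Let (b_n) satisfy b₁ = 2 and b_{n+1} = (b₁b₂⋯b_n)² for n ≥ 1, and let d(n) be the number-of-divisors function. Then for any integers z₁, z₂, the quantity (b₁b₂⋯b_N)·(z₁·Σ_{n=N+1}^∞ 1/b_n + z₂·Σ_{n=N+1}^∞ d(n)/b_n) tends to 0 as N → ∞. -/
open Finset Filter

private lemma stz_two_le (b : ℕ → ℕ) (hb1 : b 1 = 2)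
    (hrec : ∀ n ≥ 1, b (n + 1) = (∏ k ∈ Finset.Icc 1 n, b k) ^ 2) :
    ∀ k, 1 ≤ k → 2 ≤ b k := by
  intro k
  induction k using Nat.strong_induction_on with
  | _ k ih =>
    intro hk
    obtain ⟨m, rfl⟩ := Nat.exists_eq_add_of_le hk
    cases m with
    | zero => simp [hb1]
    | succ j =>
      have h1j : 1 ≤ j + 1 := by omega
      have hr : b (1 + (j + 1)) = (∏ k ∈ Finset.Icc 1 (j + 1), b k) ^ 2 := by
        rw [show 1 + (j + 1) = (j + 1) + 1 by omega]
        exact hrec (j + 1) h1j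
      have hP : 2 ≤ ∏ k ∈ Finset.Icc 1 (j + 1), b k := by
        have hcard : 2 ^ (Finset.Icc 1 (j + 1)).card ≤ ∏ k ∈ Finset.Icc 1 (j + 1), b k := by
          apply Finset.pow_card_le_prod
          intro i hi
          rw [Finset.mem_Icc] at hi
          exact ih i (by omega) hi.1
        calc 2 = 2 ^ 1 := rfl
          _ ≤ 2 ^ (Finset.Icc 1 (j + 1)).card := by
                rw [Nat.card_Icc]
                exact Nat.pow_le_pow_right (by norm_num) (by omega)
          _ ≤ _ := hcard
      rw [hr]
      exact hP.trans (Nat.le_self_pow two_ne_zero _)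

private lemma stz_pow_le (b : ℕ → ℕ) (hb1 : b 1 = 2)
    (hrec : ∀ n ≥ 1, b (n + 1) = (∏ k ∈ Finset.Icc 1 n, b k) ^ 2) (N : ℕ) :
    2 ^ N ≤ ∏ k ∈ Finset.Icc 1 N, b k := by
  have hcard : 2 ^ (Finset.Icc 1 N).card ≤ ∏ k ∈ Finset.Icc 1 N, b k := by
    apply Finset.pow_card_le_prod
    intro i hi
    rw [Finset.mem_Icc] at hi
    exact stz_two_le b hb1 hrec i hi.1
  simpa [Nat.card_Icc] using hcard

private lemma stz_b_lower (b : ℕ → ℕ) (hb1 : b 1 = 2)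
    (hrec : ∀ n ≥ 1, b (n + 1) = (∏ k ∈ Finset.Icc 1 n, b k) ^ 2) (N n : ℕ) :
    (∏ k ∈ Finset.Icc 1 N, b k) ^ 2 * 4 ^ n ≤ b (N + 1 + n) := by
  rcases Nat.eq_zero_or_pos (N + n) with h0 | h1
  · obtain ⟨hN, hn⟩ := Nat.add_eq_zero.mp h0
    subst hN; subst hn; simp [hb1]
  · have hrw : b (N + 1 + n) = (∏ k ∈ Finset.Icc 1 (N + n), b k) ^ 2 := by
      rw [show N + 1 + n = (N + n) + 1 by omega]
      exact hrec _ h1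
    rw [hrw]
    have hsplit : (∏ k ∈ Finset.Icc 1 N, b k) * ∏ k ∈ Finset.Ioc N (N + n), b k
        = ∏ k ∈ Finset.Icc 1 (N + n), b k := by
      rw [show Finset.Icc 1 N = Finset.Ioc 0 N from (Finset.Icc_add_one_left_eq_Ioc 0 N),
          show Finset.Icc 1 (N + n) = Finset.Ioc 0 (N + n) from (Finset.Icc_add_one_left_eq_Ioc 0 (N + n))]
      exact Finset.prod_Ioc_consecutive _ (Nat.zero_le N) (Nat.le_add_right N n)
    have hge : 2 ^ n ≤ ∏ k ∈ Finset.Ioc N (N + n), b k := by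
      have hcard : 2 ^ (Finset.Ioc N (N + n)).card ≤ ∏ k ∈ Finset.Ioc N (N + n), b k := by
        apply Finset.pow_card_le_prod
        intro i hi
        rw [Finset.mem_Ioc] at hi
        exact stz_two_le b hb1 hrec i (by omega)
      simpa [Nat.card_Ioc] using hcard
    calc (∏ k ∈ Finset.Icc 1 N, b k) ^ 2 * 4 ^ n
        = ((∏ k ∈ Finset.Icc 1 N, b k) * 2 ^ n) ^ 2 := by
          have h4 : (4 : ℕ) ^ n = (2 ^ n) ^ 2 := by
            rw [show (4 : ℕ) = 2 ^ 2 from rfl, ← pow_mul, ← pow_mul, mul_comm]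
          rw [h4, mul_pow]
      _ ≤ (∏ k ∈ Finset.Icc 1 (N + n), b k) ^ 2 := by
          apply Nat.pow_le_pow_left
          rw [← hsplit]
          exact Nat.mul_le_mul_left _ hge

/-- The scaled tails `(b₁⋯b_N)·(z₁·Σ_{n>N} 1/b_n + z₂·Σ_{n>N} d(n)/b_n)` tend to `0`. -/
theorem scaled_tails_tendsto_zero (b : ℕ → ℕ) (hb1 : b 1 = 2)
    (hrec : ∀ n ≥ 1, b (n + 1) = (∏ k ∈ Finset.Icc 1 n, b k) ^ 2) (z₁ z₂ : ℤ) :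
    Filter.Tendsto (fun N : ℕ =>
      (∏ k ∈ Finset.Icc 1 N, (b k : ℝ)) *
        ((z₁ : ℝ) * (∑' n : ℕ, 1 / (b (N + 1 + n) : ℝ)) +
         (z₂ : ℝ) * (∑' n : ℕ, ((Nat.divisors (N + 1 + n)).card : ℝ) / (b (N + 1 + n) : ℝ))))
      Filter.atTop (nhds 0) := by
  set A : ℝ := |(z₁ : ℝ)| + |(z₂ : ℝ)| with hA
  have hA0 : 0 ≤ A := by positivity
  have key : ∀ N : ℕ, ‖(∏ k ∈ Finset.Icc 1 N, (b k : ℝ)) *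
        ((z₁ : ℝ) * (∑' n : ℕ, 1 / (b (N + 1 + n) : ℝ)) +
         (z₂ : ℝ) * (∑' n : ℕ, ((Nat.divisors (N + 1 + n)).card : ℝ) / (b (N + 1 + n) : ℝ)))‖
      ≤ A * (2 * ((N : ℝ) + 2)) * (1/2)^N := by
    intro N
    set P : ℕ := ∏ k ∈ Finset.Icc 1 N, b k with hPdef
    set c : ℝ := (P : ℝ) with hcdef
    have hcprod : ∏ k ∈ Finset.Icc 1 N, (b k : ℝ) = c := by
      rw [hcdef, hPdef]; push_cast; ring
    have hcge : (2 : ℝ) ^ N ≤ c := by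
      rw [hcdef]; exact_mod_cast stz_pow_le b hb1 hrec N

    have hc1 : (1 : ℝ) ≤ c := le_trans (one_le_pow₀ (by norm_num)) hcge
    have hcpos : (0 : ℝ) < c := lt_of_lt_of_le one_pos hc1
    have hblow : ∀ n : ℕ, c ^ 2 * 4 ^ n ≤ (b (N + 1 + n) : ℝ) := by
      intro n
      have := stz_b_lower b hb1 hrec N n
      rw [hcdef, hPdef]; exact_mod_cast this
    have hbpos : ∀ n : ℕ, (0 : ℝ) < (b (N + 1 + n) : ℝ) := fun n =>
      lt_of_lt_of_le (by positivity) (hblow n)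
    have hd : ∀ m : ℕ, ((Nat.divisors m).card : ℝ) ≤ (m : ℝ) := by
      intro m
      have hsub : m.divisors ⊆ Finset.Icc 1 m := by
        intro d hdm
        rw [Nat.mem_divisors] at hdm
        rw [Finset.mem_Icc]
        exact ⟨Nat.pos_of_dvd_of_pos hdm.1 (Nat.pos_of_ne_zero hdm.2),
          Nat.le_of_dvd (Nat.pos_of_ne_zero hdm.2) hdm.1⟩
      have := Finset.card_le_card hsub
      rw [Nat.card_Icc] at this
      exact_mod_cast this.trans (by omega)
    have hmle : ∀ n : ℕ, ((N : ℝ) + 1 + n) ≤ ((N : ℝ) + 2) * 2 ^ n := by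
      intro n
      have h1 : (1 : ℝ) ≤ 2 ^ n := one_le_pow₀ (by norm_num)
      have h2 : (n : ℝ) < 2 ^ n := by exact_mod_cast Nat.lt_two_pow_self
      nlinarith [Nat.cast_nonneg (α := ℝ) N]
    set Bnd : ℕ → ℝ := fun n => (((N : ℝ) + 2) / c ^ 2) * (1/2) ^ n with hBnd
    have hBsum : Summable Bnd :=
      (summable_geometric_of_lt_one (by norm_num) (by norm_num)).mul_left _
    have hBtsum : ∑' n, Bnd n = (((N : ℝ) + 2) / c ^ 2) * 2 := by
      rw [hBnd, tsum_mul_left, tsum_geometric_of_lt_one (by norm_num) (by norm_num)]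
      norm_num
    have hterm : ∀ (n : ℕ) (a : ℝ), 0 ≤ a → a ≤ ((N : ℝ) + 1 + n) →
        a / (b (N + 1 + n) : ℝ) ≤ Bnd n := by
      intro n a ha ham
      have h2n : (0 : ℝ) < 2 ^ n := by positivity
      have step : a / (b (N + 1 + n) : ℝ) ≤ (((N : ℝ) + 2) * 2 ^ n) / (c ^ 2 * 4 ^ n) :=
        div_le_div₀ (by positivity) (ham.trans (hmle n)) (by positivity) (hblow n)
      refine step.trans_eq ?_
      show ((N : ℝ) + 2) * 2 ^ n / (c ^ 2 * 4 ^ n) = (((N : ℝ) + 2) / c ^ 2) * (1/2) ^ n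
      have h4 : (4 : ℝ) ^ n = 2 ^ n * 2 ^ n := by
        rw [show (4 : ℝ) = 2 * 2 by norm_num, mul_pow]
      have hc0 : c ≠ 0 := hcpos.ne'
      rw [h4, div_pow, one_pow]
      field_simp
    have hone : ∀ n : ℕ, (1 : ℝ) ≤ ((N : ℝ) + 1 + n) := by
      intro n
      have : (0:ℝ) ≤ (N:ℝ) := Nat.cast_nonneg N
      have : (0:ℝ) ≤ (n:ℝ) := Nat.cast_nonneg n
      linarith [Nat.cast_nonneg (α := ℝ) N]
    have hle1 : ∀ n : ℕ, 1 / (b (N + 1 + n) : ℝ) ≤ Bnd n := fun n =>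
      hterm n 1 zero_le_one (hone n)
    have hle2 : ∀ n : ℕ, ((Nat.divisors (N + 1 + n)).card : ℝ) / (b (N + 1 + n) : ℝ) ≤ Bnd n := by
      intro n
      refine hterm n _ (by positivity) ?_
      have := hd (N + 1 + n)
      push_cast at this ⊢
      linarith
    have hsum1 : Summable (fun n : ℕ => 1 / (b (N + 1 + n) : ℝ)) :=
      Summable.of_nonneg_of_le (fun n => by positivity) hle1 hBsum
    have hsum2 : Summable (fun n : ℕ => ((Nat.divisors (N + 1 + n)).card : ℝ) / (b (N + 1 + n) : ℝ)) :=
      Summable.of_nonneg_of_le (fun n => by positivity) hle2 hBsum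
    have hT1 : (∑' n : ℕ, 1 / (b (N + 1 + n) : ℝ)) ≤ (((N : ℝ) + 2) / c ^ 2) * 2 := by
      rw [← hBtsum]; exact hsum1.tsum_le_tsum hle1 hBsum
    have hT2 : (∑' n : ℕ, ((Nat.divisors (N + 1 + n)).card : ℝ) / (b (N + 1 + n) : ℝ))
        ≤ (((N : ℝ) + 2) / c ^ 2) * 2 := by
      rw [← hBtsum]; exact hsum2.tsum_le_tsum hle2 hBsum
    have hT1nn : 0 ≤ (∑' n : ℕ, 1 / (b (N + 1 + n) : ℝ)) :=
      tsum_nonneg (fun n => by positivity)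
    have hT2nn : 0 ≤ (∑' n : ℕ, ((Nat.divisors (N + 1 + n)).card : ℝ) / (b (N + 1 + n) : ℝ)) :=
      tsum_nonneg (fun n => by positivity)
    set T1 := (∑' n : ℕ, 1 / (b (N + 1 + n) : ℝ)) with hT1def
    set T2 := (∑' n : ℕ, ((Nat.divisors (N + 1 + n)).card : ℝ) / (b (N + 1 + n) : ℝ)) with hT2def
    rw [hcprod, Real.norm_eq_abs, abs_mul, abs_of_pos hcpos]
    have habs : |(z₁ : ℝ) * T1 + (z₂ : ℝ) * T2| ≤ A * ((((N : ℝ) + 2) / c ^ 2) * 2) := by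
      calc |(z₁ : ℝ) * T1 + (z₂ : ℝ) * T2| ≤ |(z₁ : ℝ)| * T1 + |(z₂ : ℝ)| * T2 := by
            refine (abs_add_le _ _).trans ?_
            rw [abs_mul, abs_mul, abs_of_nonneg hT1nn, abs_of_nonneg hT2nn]
        _ ≤ |(z₁ : ℝ)| * ((((N : ℝ) + 2) / c ^ 2) * 2) + |(z₂ : ℝ)| * ((((N : ℝ) + 2) / c ^ 2) * 2) := by
            gcongr <;> first
              | exact abs_nonneg _
              | exact hT1
              | exact hT2
        _ = A * ((((N : ℝ) + 2) / c ^ 2) * 2) := by rw [hA]; ring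
    calc c * |(z₁ : ℝ) * T1 + (z₂ : ℝ) * T2|
        ≤ c * (A * ((((N : ℝ) + 2) / c ^ 2) * 2)) := by
          exact mul_le_mul_of_nonneg_left habs hcpos.le
      _ = A * (2 * ((N : ℝ) + 2)) * (1 / c) := by field_simp
      _ ≤ A * (2 * ((N : ℝ) + 2)) * (1/2) ^ N := by
          have hinv : 1 / c ≤ (1/2 : ℝ) ^ N := by
            rw [one_div_pow]
            exact one_div_le_one_div_of_le (by positivity) hcge
          have hnn : 0 ≤ A * (2 * ((N : ℝ) + 2)) := by positivity
          exact mul_le_mul_of_nonneg_left hinv hnn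
  have hg : Filter.Tendsto (fun N : ℕ => A * (2 * ((N : ℝ) + 2)) * (1/2) ^ N)
      Filter.atTop (nhds 0) := by
    have hgeo : Summable (fun N : ℕ => (1/2 : ℝ) ^ N) :=
      summable_geometric_of_lt_one (by norm_num) (by norm_num)
    have hpg : Summable (fun N : ℕ => (N : ℝ) * (1/2) ^ N) := by
      have := summable_pow_mul_geometric_of_norm_lt_one (R := ℝ) 1 (r := 1/2) (by norm_num)
      simpa using this
    have hs : Summable (fun N : ℕ => A * (2 * ((N : ℝ) + 2)) * (1/2) ^ N) := by
      have h := (hpg.mul_left (2 * A)).add (hgeo.mul_left (4 * A))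
      refine h.congr fun N => ?_
      ring
    exact hs.tendsto_atTop_zero
  exact squeeze_zero_norm key hg
end

section
/- Let δ > 1/3 and let Q = (b_n) be a sequence of positive integers with b_n ≥ 2. Suppose there are infinitely many N such that σ(N+1)·(b₁⋯b_N)^δ ≤ b_{N+1}, φ(N+1)·(b₁⋯b_N)^δ ≤ b_{N+1}, and d(N+1)·(b₁⋯b_N)^δ ≤ b_{N+1}, where σ is the sum-of-divisors function, φ the Euler totient, and d the number-of-divisors function. Then setting β₁ = Σ_{n≥1} σ(n)/(b₁⋯b_n), β₂ = Σ_{n≥1} φ(n)/(b₁⋯b_n), β₃ = Σ_{n≥1} d(n)/(b₁⋯b_n), there exist δ' > 1/3 and infinitely many N such that |β_i - p_{i,N}/(b₁⋯b_N)| < 1/(b₁⋯b_N)^{1+δ'} for all i = 1,2,3, where p_{i,N} is the integer numerator of the N-th partial sum over the common denominator b₁⋯b_N. -/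
open Finset Filter

private lemma sq_le_geom_aux : ∀ m : ℕ, ((m : ℝ) + 3 + 2)^2 ≤ 9 * (3/2)^(m+3) := by
  intro m
  induction m with
  | zero => norm_num
  | succ k ih =>
    have hp : (3/2:ℝ)^(k+1+3) = (3/2) * (3/2)^(k+3) := by ring
    push_cast at ih ⊢
    rw [hp]; nlinarith [ih, sq_nonneg ((k:ℝ)), Nat.cast_nonneg (α := ℝ) k]

private lemma sq_le_geom (n : ℕ) : ((n : ℝ) + 2)^2 ≤ 9 * (3/2)^n := by
  match n with
  | 0 => norm_num
  | 1 => norm_num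
  | 2 => norm_num
  | (m+3) => have := sq_le_geom_aux m; push_cast at this ⊢; linarith

set_option maxHeartbeats 1000000 in
private lemma tail_bound (b : ℕ → ℕ) (hb : ∀ n ≥ 1, 2 ≤ b n)
    (a : ℕ → ℕ) (ha : ∀ m : ℕ, 1 ≤ m → (a m : ℝ) ≤ (m : ℝ)^2) (N : ℕ) :
    Summable (fun n : ℕ => (a (n+1) : ℝ) / ∏ k ∈ Icc 1 (n+1), (b k : ℝ)) ∧
    |(∑' n : ℕ, (a (n+1) : ℝ) / ∏ k ∈ Icc 1 (n+1), (b k : ℝ)) -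
      ∑ n ∈ Finset.range N, (a (n+1) : ℝ) / ∏ k ∈ Icc 1 (n+1), (b k : ℝ)|
      ≤ 36 * ((N:ℝ)+2)^2 / ∏ k ∈ Icc 1 (N+1), (b k : ℝ) := by
  set P : ℕ → ℝ := fun n => ∏ k ∈ Icc 1 n, (b k : ℝ) with hP
  have h2 : ∀ n, (2:ℝ)^n ≤ P n := by
    intro n
    have : ∏ k ∈ Icc 1 n, (2:ℝ) ≤ ∏ k ∈ Icc 1 n, (b k : ℝ) := by
      apply Finset.prod_le_prod (fun i _ => by norm_num)
      intro i hi
      exact_mod_cast hb i (Finset.mem_Icc.mp hi).1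
    simpa [Finset.prod_const, Nat.card_Icc] using this
  have hpos : ∀ n, 0 < P n := fun n => lt_of_lt_of_le (by positivity) (h2 n)
  have hstep : ∀ n : ℕ, P (n+1) = P n * b (n+1) := by
    intro n
    simp only [hP]
    rw [Finset.prod_Icc_succ_top (by omega)]
  have hge : ∀ N n : ℕ, P (N+1) * 2^n ≤ P (N+1+n) := by
    intro N n
    induction n with
    | zero => simp
    | succ m ih =>
      have hb2 : (2:ℝ) ≤ (b (N+1+m+1) : ℝ) := by exact_mod_cast hb _ (by omega)
      calc P (N+1) * 2^(m+1) = (P (N+1) * 2^m) * 2 := by ring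
        _ ≤ P (N+1+m) * (b (N+1+m+1) : ℝ) := by
            apply mul_le_mul ih hb2 (by norm_num) (le_of_lt (hpos _))
        _ = P (N+1+(m+1)) := (hstep (N+1+m)).symm
  have hfnonneg : ∀ n : ℕ, 0 ≤ (a (n+1) : ℝ) / P (n+1) := fun n =>
    div_nonneg (Nat.cast_nonneg _) (le_of_lt (hpos _))
  -- key pointwise bound
  have bound : ∀ (M n : ℕ), (a (M+n+1) : ℝ) / P (M+n+1) ≤
      (9 * ((M:ℝ)+2)^2 / P (M+1)) * (3/4)^n := by
    intro M n
    have hnum : (a (M+n+1) : ℝ) ≤ ((M:ℝ)+2)^2 * (9 * (3/2)^n) := by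
      have h1 : (a (M+n+1) : ℝ) ≤ ((M:ℝ)+(n:ℝ)+1)^2 := by
        have := ha (M+n+1) (by omega); push_cast at this ⊢; linarith
      have h2 : ((M:ℝ)+(n:ℝ)+1) ≤ ((M:ℝ)+2) * ((n:ℝ)+2) := by nlinarith [Nat.cast_nonneg (α := ℝ) M, Nat.cast_nonneg (α := ℝ) n]
      have h3 : ((M:ℝ)+(n:ℝ)+1)^2 ≤ (((M:ℝ)+2) * ((n:ℝ)+2))^2 := by
        apply pow_le_pow_left₀ (by positivity) h2
      have h4 : ((n:ℝ)+2)^2 ≤ 9 * (3/2)^n := sq_le_geom n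
      calc (a (M+n+1) : ℝ) ≤ (((M:ℝ)+2) * ((n:ℝ)+2))^2 := le_trans h1 h3
        _ = ((M:ℝ)+2)^2 * ((n:ℝ)+2)^2 := by ring
        _ ≤ ((M:ℝ)+2)^2 * (9 * (3/2)^n) := by
            apply mul_le_mul_of_nonneg_left h4 (by positivity)
    have hden : P (M+1) * 2^n ≤ P (M+n+1) := by
      have := hge M n
      have e : M+1+n = M+n+1 := by omega
      rwa [e] at this
    have hdpos : (0:ℝ) < P (M+1) * 2^n := mul_pos (hpos _) (by positivity)
    calc (a (M+n+1) : ℝ) / P (M+n+1) ≤ (((M:ℝ)+2)^2 * (9 * (3/2)^n)) / (P (M+1) * 2^n) := by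
          apply div_le_div₀ (by positivity) hnum hdpos hden
      _ = (9 * ((M:ℝ)+2)^2 / P (M+1)) * (3/4)^n := by
          have h24 : ((3:ℝ)/4)^n = (3/2)^n / 2^n := by
            rw [show (3:ℝ)/4 = (3/2)/2 by norm_num, div_pow]
          rw [h24, div_mul_div_comm]
          ring
  have hgsum : ∀ C : ℝ, Summable (fun n : ℕ => C * (3/4:ℝ)^n) := fun C =>
    (summable_geometric_of_lt_one (by norm_num) (by norm_num)).mul_left C
  have hsum : Summable (fun n : ℕ => (a (n+1) : ℝ) / P (n+1)) := by
    apply Summable.of_nonneg_of_le hfnonneg (fun n => ?_) (hgsum (9 * ((0:ℝ)+2)^2 / P 1))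
    have := bound 0 n
    simpa using this
  refine ⟨hsum, ?_⟩
  have hsplit := Summable.sum_add_tsum_nat_add N hsum
  have htail_sum : Summable (fun n : ℕ => (a ((n+N)+1) : ℝ) / P ((n+N)+1)) :=
    (summable_nat_add_iff N).mpr hsum
  have htail_le : (∑' n : ℕ, (a ((n+N)+1) : ℝ) / P ((n+N)+1)) ≤
      36 * ((N:ℝ)+2)^2 / P (N+1) := by
    have hle : ∀ n : ℕ, (a ((n+N)+1) : ℝ) / P ((n+N)+1) ≤
        (9 * ((N:ℝ)+2)^2 / P (N+1)) * (3/4)^n := by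
      intro n
      have := bound N n
      have e : N+n+1 = n+N+1 := by omega
      rwa [e] at this
    calc (∑' n : ℕ, (a ((n+N)+1) : ℝ) / P ((n+N)+1))
        ≤ ∑' n : ℕ, (9 * ((N:ℝ)+2)^2 / P (N+1)) * (3/4)^n :=
          Summable.tsum_le_tsum hle htail_sum (hgsum _)
      _ = (9 * ((N:ℝ)+2)^2 / P (N+1)) * (1 - 3/4)⁻¹ := by
          rw [tsum_mul_left, tsum_geometric_of_lt_one (by norm_num) (by norm_num)]
      _ = 36 * ((N:ℝ)+2)^2 / P (N+1) := by ring
  have htail_nonneg : 0 ≤ ∑' n : ℕ, (a ((n+N)+1) : ℝ) / P ((n+N)+1) :=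
    tsum_nonneg (fun n => hfnonneg _)
  have heq : (∑' n : ℕ, (a (n+1) : ℝ) / P (n+1)) -
      ∑ n ∈ Finset.range N, (a (n+1) : ℝ) / P (n+1)
      = ∑' n : ℕ, (a ((n+N)+1) : ℝ) / P ((n+N)+1) := by
    rw [← hsplit]; ring
  rw [heq, abs_of_nonneg htail_nonneg]
  exact htail_le

private lemma divisors_card_le (m : ℕ) : m.divisors.card ≤ m := by
  have hsub : m.divisors ⊆ Finset.Icc 1 m := by
    intro d hd
    rcases Nat.mem_divisors.mp hd with ⟨hdvd, hm⟩
    have hd0 : d ≠ 0 := by rintro rfl; exact hm (Nat.eq_zero_of_zero_dvd hdvd)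
    exact Finset.mem_Icc.mpr ⟨Nat.one_le_iff_ne_zero.mpr hd0, Nat.divisor_le hd⟩
  simpa [Nat.card_Icc] using Finset.card_le_card hsub

private lemma sigma_le_sq (m : ℕ) (hm : 1 ≤ m) : ((∑ d ∈ m.divisors, d : ℕ) : ℝ) ≤ (m:ℝ)^2 := by
  have h : (∑ d ∈ m.divisors, d) ≤ m.divisors.card * m := by
    simpa using Finset.sum_le_card_nsmul m.divisors id m (fun d hd => Nat.divisor_le hd)
  have h2 : m.divisors.card * m ≤ m * m := Nat.mul_le_mul_right m (divisors_card_le m)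
  have : (∑ d ∈ m.divisors, d) ≤ m * m := le_trans h h2
  calc ((∑ d ∈ m.divisors, d : ℕ) : ℝ) ≤ ((m * m : ℕ) : ℝ) := by exact_mod_cast this
    _ = (m:ℝ)^2 := by push_cast; ring

private lemma eventually_sq_lt (c : ℝ) (hc : 1 < c) :
    ∃ N₀ : ℕ, ∀ N ≥ N₀, 36 * ((N:ℝ)+2)^2 < c^N := by
  set r : ℝ := c⁻¹ with hr
  have hr0 : 0 < r := inv_pos.mpr (lt_trans one_pos hc)
  have hr1 : r < 1 := inv_lt_one_of_one_lt₀ hc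
  have hsum : Summable (fun n : ℕ => ((n:ℝ))^2 * r^n) :=
    summable_pow_mul_geometric_of_norm_lt_one 2 (by rw [Real.norm_eq_abs, abs_of_pos hr0]; exact hr1)
  have h0 : Filter.Tendsto (fun n : ℕ => ((n:ℝ))^2 * r^n) atTop (nhds 0) :=
    hsum.tendsto_atTop_zero
  have h1 : Filter.Tendsto (fun N : ℕ => (((N+2:ℕ):ℝ))^2 * r^(N+2)) atTop (nhds 0) :=
    h0.comp (Filter.tendsto_add_atTop_nat 2)
  have h2 : Filter.Tendsto (fun N : ℕ => 36 * ((N:ℝ)+2)^2 * r^N) atTop (nhds 0) := by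
    have h3 := h1.const_mul (36 / r^2)
    rw [mul_zero] at h3
    refine h3.congr (fun N => ?_)
    have hrne : r ≠ 0 := ne_of_gt hr0
    push_cast
    field_simp
    ring
  obtain ⟨N₀, hN₀⟩ := Filter.eventually_atTop.mp (h2.eventually_lt_const one_pos)
  refine ⟨N₀, fun N hN => ?_⟩
  have hlt := hN₀ N hN
  have hcpos : 0 < c := lt_trans one_pos hc
  have hmul := mul_lt_mul_of_pos_right hlt (pow_pos hcpos N)
  have hrc : r^N * c^N = 1 := by
    rw [← mul_pow, inv_mul_cancel₀ (ne_of_gt hcpos), one_pow]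
  calc 36 * ((N:ℝ)+2)^2 = 36 * ((N:ℝ)+2)^2 * (r^N * c^N) := by rw [hrc, mul_one]
    _ = 36 * ((N:ℝ)+2)^2 * r^N * c^N := by ring
    _ < 1 * c^N := hmul
    _ = c^N := one_mul _

private lemma frac_lt (b : ℕ → ℕ) (hb : ∀ n ≥ 1, 2 ≤ b n) (δ δ' : ℝ)
    (hδ0 : 0 < δ) (hδ'0 : 0 < δ') (hε : δ' < δ) (N : ℕ)
    (hbig : 36 * ((N:ℝ)+2)^2 < (∏ k ∈ Icc 1 N, (b k:ℝ))^(δ - δ'))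
    (hgN : (∏ k ∈ Icc 1 N, (b k:ℝ))^δ ≤ (b (N+1):ℝ)) :
    36*((N:ℝ)+2)^2 / ∏ k ∈ Icc 1 (N+1), (b k:ℝ) <
      1 / (∏ k ∈ Icc 1 N, (b k:ℝ))^(1+δ') := by
  set P : ℝ := ∏ k ∈ Icc 1 N, (b k:ℝ) with hPdef
  have hPpos : 0 < P := by
    apply Finset.prod_pos
    intro i hi
    have := hb i (Finset.mem_Icc.mp hi).1
    positivity
  have hQ : (∏ k ∈ Icc 1 (N+1), (b k:ℝ)) = P * (b (N+1):ℝ) :=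
    Finset.prod_Icc_succ_top (by omega) _
  have hQge : P ^ (1+δ) ≤ ∏ k ∈ Icc 1 (N+1), (b k:ℝ) := by
    rw [hQ, Real.rpow_add hPpos, Real.rpow_one]
    exact mul_le_mul_of_nonneg_left hgN (le_of_lt hPpos)
  have hQpos : (0:ℝ) < ∏ k ∈ Icc 1 (N+1), (b k:ℝ) := by
    rw [hQ]
    have := hb (N+1) (by omega)
    have : (0:ℝ) < (b (N+1):ℝ) := by positivity
    exact mul_pos hPpos this
  have h1 : 36*((N:ℝ)+2)^2 / ∏ k ∈ Icc 1 (N+1), (b k:ℝ) ≤ 36*((N:ℝ)+2)^2 / P^(1+δ) := by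
    apply div_le_div_of_nonneg_left (by positivity) (Real.rpow_pos_of_pos hPpos _) hQge
  have h2 : 36*((N:ℝ)+2)^2 / P^(1+δ) < 1 / P^(1+δ') := by
    rw [div_lt_div_iff₀ (Real.rpow_pos_of_pos hPpos _) (Real.rpow_pos_of_pos hPpos _)]
    have hsplit : P^(1+δ) = P^(1+δ') * P^(δ-δ') := by
      rw [← Real.rpow_add hPpos]; ring_nf
    rw [one_mul, hsplit, mul_comm (36*((N:ℝ)+2)^2) (P^(1+δ'))]
    exact mul_lt_mul_of_pos_left hbig (Real.rpow_pos_of_pos hPpos _)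
  exact lt_of_le_of_lt h1 h2

private lemma prod_ge_two_pow (b : ℕ → ℕ) (hb : ∀ n ≥ 1, 2 ≤ b n) (n : ℕ) :
    (2:ℝ)^n ≤ ∏ k ∈ Icc 1 n, (b k : ℝ) := by
  have : ∏ k ∈ Icc 1 n, (2:ℝ) ≤ ∏ k ∈ Icc 1 n, (b k : ℝ) := by
    apply Finset.prod_le_prod (fun i _ => by norm_num)
    intro i hi
    exact_mod_cast hb i (Finset.mem_Icc.mp hi).1
  simpa [Finset.prod_const, Nat.card_Icc] using this

set_option maxHeartbeats 1000000 in

/-- Simultaneous-approximation step for Theorem 1.2: the partial sums of the three series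
`Σ σ(n)/(b₁⋯b_n)`, `Σ φ(n)/(b₁⋯b_n)`, `Σ d(n)/(b₁⋯b_n)` with common denominator `b₁⋯b_N`
approximate the sums to exponent `1 + δ'` for infinitely many `N`. -/
theorem arithmetic_series_simultaneous_approx (δ : ℝ) (hδ : 1 / 3 < δ) (b : ℕ → ℕ)
    (hb : ∀ n ≥ 1, 2 ≤ b n)
    (hgrowth : {N : ℕ |
      ((∑ d ∈ (N + 1).divisors, d : ℕ) : ℝ) * (∏ k ∈ Finset.Icc 1 N, (b k : ℝ)) ^ δ ≤ (b (N + 1) : ℝ) ∧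
      ((N + 1).totient : ℝ) * (∏ k ∈ Finset.Icc 1 N, (b k : ℝ)) ^ δ ≤ (b (N + 1) : ℝ) ∧
      (((N + 1).divisors.card : ℝ)) * (∏ k ∈ Finset.Icc 1 N, (b k : ℝ)) ^ δ ≤
        (b (N + 1) : ℝ)}.Infinite)
    (β₁ β₂ β₃ : ℝ)
    (hβ₁ : β₁ = ∑' n : ℕ, ((∑ d ∈ (n + 1).divisors, d : ℕ) : ℝ) / ∏ k ∈ Finset.Icc 1 (n + 1), (b k : ℝ))
    (hβ₂ : β₂ = ∑' n : ℕ, ((n + 1).totient : ℝ) / ∏ k ∈ Finset.Icc 1 (n + 1), (b k : ℝ))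
    (hβ₃ : β₃ = ∑' n : ℕ,
      ((n + 1).divisors.card : ℝ) / ∏ k ∈ Finset.Icc 1 (n + 1), (b k : ℝ)) :
    ∃ δ' : ℝ, 1 / 3 < δ' ∧
      {N : ℕ |
        |β₁ - ∑ n ∈ Finset.range N,
          ((∑ d ∈ (n + 1).divisors, d : ℕ) : ℝ) / ∏ k ∈ Finset.Icc 1 (n + 1), (b k : ℝ)| <
            1 / (∏ k ∈ Finset.Icc 1 N, (b k : ℝ)) ^ (1 + δ') ∧
        |β₂ - ∑ n ∈ Finset.range N,
          ((n + 1).totient : ℝ) / ∏ k ∈ Finset.Icc 1 (n + 1), (b k : ℝ)| <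
            1 / (∏ k ∈ Finset.Icc 1 N, (b k : ℝ)) ^ (1 + δ') ∧
        |β₃ - ∑ n ∈ Finset.range N,
          ((n + 1).divisors.card : ℝ) / ∏ k ∈ Finset.Icc 1 (n + 1), (b k : ℝ)| <
            1 / (∏ k ∈ Finset.Icc 1 N, (b k : ℝ)) ^ (1 + δ')}.Infinite := by
  set ε : ℝ := (δ - 1/3)/2 with hε
  have hεpos : 0 < ε := by rw [hε]; linarith
  set δ' : ℝ := 1/3 + ε with hδ'
  have hδ'gt : 1/3 < δ' := by rw [hδ']; linarith
  have hδ'lt : δ' < δ := by rw [hδ', hε]; linarith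
  have hδδ' : δ - δ' = ε := by rw [hδ', hε]; ring
  refine ⟨δ', hδ'gt, ?_⟩
  -- constant c = 2^ε > 1
  set c : ℝ := (2:ℝ)^ε with hc
  have hc1 : 1 < c := by
    rw [hc]
    exact Real.one_lt_rpow_iff_of_pos (by norm_num) |>.mpr (Or.inl ⟨by norm_num, hεpos⟩)
  obtain ⟨N₀, hN₀⟩ := eventually_sq_lt c hc1
  apply (hgrowth.diff (Set.finite_lt_nat N₀)).mono
  intro N hN
  obtain ⟨⟨hg1, hg2, hg3⟩, hNge⟩ := hN
  have hNge' : N₀ ≤ N := not_lt.mp hNge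
  -- positivity of P N
  have hPpos : (0:ℝ) < ∏ k ∈ Icc 1 N, (b k : ℝ) := by
    apply Finset.prod_pos
    intro i hi
    have := hb i (Finset.mem_Icc.mp hi).1
    positivity
  -- P^δ ≤ b (N+1)
  have hφ1 : (1:ℝ) ≤ ((N+1).totient : ℝ) := by
    exact_mod_cast Nat.totient_pos.mpr (Nat.succ_pos N)
  have hgN : (∏ k ∈ Icc 1 N, (b k : ℝ))^δ ≤ (b (N+1) : ℝ) := by
    calc (∏ k ∈ Icc 1 N, (b k : ℝ))^δ = 1 * (∏ k ∈ Icc 1 N, (b k : ℝ))^δ := (one_mul _).symm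
      _ ≤ ((N+1).totient : ℝ) * (∏ k ∈ Icc 1 N, (b k : ℝ))^δ :=
          mul_le_mul_of_nonneg_right hφ1 (le_of_lt (Real.rpow_pos_of_pos hPpos δ))
      _ ≤ (b (N+1) : ℝ) := hg2
  -- the big inequality
  have hbig : 36 * ((N:ℝ)+2)^2 < (∏ k ∈ Icc 1 N, (b k : ℝ))^(δ - δ') := by
    have h1 : 36 * ((N:ℝ)+2)^2 < c^N := hN₀ N hNge'
    have e1 : c^N = ((2:ℝ)^N : ℝ)^ε := by
      rw [hc, ← Real.rpow_natCast ((2:ℝ)^ε) N, ← Real.rpow_mul (by norm_num), mul_comm,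
        Real.rpow_mul (by norm_num), Real.rpow_natCast]
    have h2 : ((2:ℝ)^N : ℝ)^ε ≤ (∏ k ∈ Icc 1 N, (b k : ℝ))^ε :=
      Real.rpow_le_rpow (by positivity) (prod_ge_two_pow b hb N) (le_of_lt hεpos)
    rw [hδδ']
    calc 36 * ((N:ℝ)+2)^2 < c^N := h1
      _ = ((2:ℝ)^N : ℝ)^ε := e1
      _ ≤ (∏ k ∈ Icc 1 N, (b k : ℝ))^ε := h2
  have hfrac := frac_lt b hb δ δ' (by linarith) (by linarith) hδ'lt N hbig hgN
  -- the three tail bounds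
  have ha₁ : ∀ m : ℕ, 1 ≤ m → (((fun m => ∑ d ∈ m.divisors, d) m : ℕ) : ℝ) ≤ (m : ℝ)^2 :=
    fun m hm => sigma_le_sq m hm
  have ha₂ : ∀ m : ℕ, 1 ≤ m → ((Nat.totient m : ℕ) : ℝ) ≤ (m : ℝ)^2 := by
    intro m hm
    have h := Nat.totient_le m
    have hm1 : (1:ℝ) ≤ (m:ℝ) := by exact_mod_cast hm
    have : (Nat.totient m : ℝ) ≤ (m:ℝ) := by exact_mod_cast h
    nlinarith
  have ha₃ : ∀ m : ℕ, 1 ≤ m → (((fun m => m.divisors.card) m : ℕ) : ℝ) ≤ (m : ℝ)^2 := by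
    intro m hm
    have h := divisors_card_le m
    have hm1 : (1:ℝ) ≤ (m:ℝ) := by exact_mod_cast hm
    have : (m.divisors.card : ℝ) ≤ (m:ℝ) := by exact_mod_cast h
    nlinarith
  have ht₁ := (tail_bound b hb (fun m => ∑ d ∈ m.divisors, d) ha₁ N).2
  have ht₂ := (tail_bound b hb Nat.totient ha₂ N).2
  have ht₃ := (tail_bound b hb (fun m => m.divisors.card) ha₃ N).2
  rw [hβ₁, hβ₂, hβ₃]
  exact ⟨lt_of_le_of_lt ht₁ hfrac, lt_of_le_of_lt ht₂ hfrac, lt_of_le_of_lt ht₃ hfrac⟩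
end
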